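/- (Proposition 4: Lipschitz continuity of the document distribution in the parameter.) For every m ≥ 1 and any two parameters θ′ = (θ′_1,…,θ′_K) and θ″ = (θ″_1,…,θ″_K) (each θ′_k, θ″_k a probability vector on [V]), ‖p_{θ′,m} − p_{θ″,m}‖_1 = Σ_{x∈[V]^m} |p_{θ′,m}(x) − p_{θ″,m}(x)| ≤ (2V)^m · ‖θ′ − θ″‖_2, where ‖θ′ − θ″‖_2 = sqrt( Σ_{k=1}^K Σ_{ℓ=1}^V (θ′_k(ℓ) − θ″_k(ℓ))² ). In particular, for fixed θ the map θ′ ↦ ‖p_{θ,m} − p_{θ′,m}‖_1 is continuous with respect to ‖·‖_2. -/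

import Mathlib

open MeasureTheory Filter

noncomputable section

namespace TopicModel

/-- The probability simplex in `ℝ^K`. -/
def simplex (K : ℕ) : Set (Fin K → ℝ) := {h | (∀ k, 0 ≤ h k) ∧ ∑ k, h k = 1}

/-- The parameter set `Θ_{c₀}`: `K` topic vectors, each a probability vector on `[V]`
with all entries at least `c₀`. -/
def Theta (c0 : ℝ) (V K : ℕ) : Set (Fin K → Fin V → ℝ) :=
  {θ | (∀ k ℓ, c0 ≤ θ k ℓ) ∧ ∀ k, ∑ ℓ, θ k ℓ = 1}

/-- `θ` is a tuple of probability vectors. -/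
def IsParam {V K : ℕ} (θ : Fin K → Fin V → ℝ) : Prop :=
  (∀ k ℓ, 0 ≤ θ k ℓ) ∧ ∀ k, ∑ ℓ, θ k ℓ = 1

/-- Word probability `p_{θ,h}(v) = Σ_k h_k θ_k(v)`. -/
def pWord {V K : ℕ} (θ : Fin K → Fin V → ℝ) (h : Fin K → ℝ) (v : Fin V) : ℝ :=
  ∑ k, h k * θ k v

/-- Document probability given mixing vector `h`: `p_{θ,h}(x) = Π_i p_{θ,h}(x_i)`. -/
def pDoc {V K : ℕ} (m : ℕ) (θ : Fin K → Fin V → ℝ) (h : Fin K → ℝ)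
    (x : Fin m → Fin V) : ℝ :=
  ∏ i, pWord θ h (x i)

/-- Marginal document probability `p_{θ,m}(x) = ∫ p_{θ,h}(x) dν₀(h)`. -/
def pM {V K : ℕ} (ν0 : Measure (Fin K → ℝ)) (m : ℕ) (θ : Fin K → Fin V → ℝ)
    (x : Fin m → Fin V) : ℝ :=
  ∫ h, pDoc m θ h x ∂ν0

/-- `ℓ¹`-norm of a `K × V` array: `‖δ‖₁ = Σ_k Σ_ℓ |δ_k(ℓ)|`. -/
def norm1 {V K : ℕ} (δ : Fin K → Fin V → ℝ) : ℝ := ∑ k, ∑ ℓ, |δ k ℓ|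

/-- Wasserstein distance between parameters:
`d_W(θ,θ') = min_π Σ_k ‖θ_k − θ'_{π(k)}‖₁`. -/
def dW {V K : ℕ} (θ θ' : Fin K → Fin V → ℝ) : ℝ :=
  ⨅ π : Equiv.Perm (Fin K), ∑ k, ∑ ℓ, |θ k ℓ - θ' (π k) ℓ|

/-- `L¹` distance between the document pmfs of two parameters. -/
def distL1 {V K : ℕ} (ν0 : Measure (Fin K → ℝ)) (m : ℕ)
    (θ θ' : Fin K → Fin V → ℝ) : ℝ :=
  ∑ x : Fin m → Fin V, |pM ν0 m θ x - pM ν0 m θ' x|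

/-- The `p`-th order degeneracy criterion `𝔡_{m,p}(θ)`: the infimum over all
`δ` with `‖δ‖₁ = 1` and `Σ_ℓ δ_k(ℓ) = 0` for every `k`, of
`Σ_{x ∈ [V]^m} |∫ p_{θ,h}(x) Σ_{i₁<⋯<i_p} Π_t (δ_h(x_{i_t}) / p_{θ,h}(x_{i_t})) dν₀|`. -/
def degen {V K : ℕ} (ν0 : Measure (Fin K → ℝ)) (m : ℕ) (θ : Fin K → Fin V → ℝ)
    (p : ℕ) : ℝ :=
  sInf {r : ℝ | ∃ δ : Fin K → Fin V → ℝ, norm1 δ = 1 ∧ (∀ k, ∑ ℓ, δ k ℓ = 0) ∧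
    r = ∑ x : Fin m → Fin V,
      |∫ h, pDoc m θ h x *
        ∑ S ∈ Finset.powersetCard p (Finset.univ : Finset (Fin m)),
          ∏ i ∈ S, ((∑ k, h k * δ k (x i)) / pWord θ h (x i)) ∂ν0|}

/-- The order of degeneracy `𝔭(m;θ) ∈ ℕ ∪ {∞}`:
the least `p ∈ {1,…,m}` with `𝔡_{m,p}(θ) > 0`, or `∞` if none exists. -/
def pOrder {V K : ℕ} (ν0 : Measure (Fin K → ℝ)) (m : ℕ) (θ : Fin K → Fin V → ℝ) : ℕ∞ :=
  sInf ((↑) '' {p : ℕ | 1 ≤ p ∧ p ≤ m ∧ 0 < degen ν0 m θ p})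

/-- Assumption (A2) on the mixing measure `ν₀`: a Borel probability measure supported on the
simplex, exchangeable, with `E[h₁²] > E[h₁h₂]` and (when `K ≥ 3`)
`E[h₁³] + 2E[h₁h₂h₃] > 3E[h₁²h₂]`. -/
structure NiceMixing (K : ℕ) (ν0 : Measure (Fin K → ℝ)) : Prop where
  prob : IsProbabilityMeasure ν0
  support : ν0 (simplex K)ᶜ = 0
  exch : ∀ π : Equiv.Perm (Fin K), Measure.map (fun h => h ∘ π) ν0 = ν0
  mom2 : ∀ i j : Fin K, i ≠ j → ∫ h, h i * h j ∂ν0 < ∫ h, h i ^ 2 ∂ν0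
  mom3 : ∀ i j k : Fin K, i ≠ j → j ≠ k → i ≠ k →
    3 * ∫ h, h i ^ 2 * h j ∂ν0 < ∫ h, h i ^ 3 ∂ν0 + 2 * ∫ h, h i * h j * h k ∂ν0

/-- The equivalence class `Θ̃_{c₀}(θ)` of parameters inducing the same document pmf as `θ`. -/
def equivClass {V K : ℕ} (ν0 : Measure (Fin K → ℝ)) (m : ℕ) (c0 : ℝ)
    (θ : Fin K → Fin V → ℝ) : Set (Fin K → Fin V → ℝ) :=
  {θ' | θ' ∈ Theta c0 V K ∧ ∀ x : Fin m → Fin V, pM ν0 m θ' x = pM ν0 m θ x}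

/-- Probability of the event `A` under `n` i.i.d. draws from the pmf `p` on a finite set. -/
def prodProb {α : Type*} [Fintype α] (p : α → ℝ) (n : ℕ) (A : Set (Fin n → α)) : ℝ :=
  ∑ xs : Fin n → α, A.indicator (fun ys => ∏ i, p (ys i)) xs

end TopicModel

namespace TopicModel

/-- Product difference bound: if all factors are bounded by 1 in absolute value, then
the difference of products is bounded by the sum of differences. -/
lemma abs_prod_sub_prod_le {ι : Type*} (s : Finset ι) (a b : ι → ℝ)
    (ha : ∀ i ∈ s, |a i| ≤ 1) (hb : ∀ i ∈ s, |b i| ≤ 1) :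
    |∏ i ∈ s, a i - ∏ i ∈ s, b i| ≤ ∑ i ∈ s, |a i - b i| := by
  induction s using Finset.cons_induction with
  | empty => simp
  | cons j s hj ih =>
    rw [Finset.prod_cons, Finset.prod_cons, Finset.sum_cons]
    have ha' : ∀ i ∈ s, |a i| ≤ 1 := fun i hi => ha i (Finset.mem_cons_of_mem hi)
    have hb' : ∀ i ∈ s, |b i| ≤ 1 := fun i hi => hb i (Finset.mem_cons_of_mem hi)
    have h1 : |∏ i ∈ s, b i| ≤ 1 := by
      rw [Finset.abs_prod]
      exact Finset.prod_le_one (fun i _ => abs_nonneg _) hb'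
    calc |a j * ∏ i ∈ s, a i - b j * ∏ i ∈ s, b i|
        = |a j * (∏ i ∈ s, a i - ∏ i ∈ s, b i) + (a j - b j) * ∏ i ∈ s, b i| := by
          congr 1; ring
      _ ≤ |a j| * |∏ i ∈ s, a i - ∏ i ∈ s, b i| + |a j - b j| * |∏ i ∈ s, b i| := by
          refine (abs_add_le _ _).trans ?_
          rw [abs_mul, abs_mul]
      _ ≤ 1 * (∑ i ∈ s, |a i - b i|) + |a j - b j| * 1 := by
          refine add_le_add (mul_le_mul (ha j (Finset.mem_cons_self j s)) (ih ha' hb')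
            (abs_nonneg _) zero_le_one) (mul_le_mul_of_nonneg_left h1 (abs_nonneg _))
      _ = |a j - b j| + ∑ i ∈ s, |a i - b i| := by ring

/-- **Proposition 4 (Lipschitz continuity of the document distribution in the parameter).**
For any two parameters `θ'`, `θ''` (tuples of probability vectors),
`‖p_{θ',m} − p_{θ'',m}‖₁ ≤ (2V)^m · ‖θ' − θ''‖₂`; in particular, for fixed `θ` the map
`θ' ↦ ‖p_{θ,m} − p_{θ',m}‖₁` is continuous on the set of parameters. -/
theorem distL1_lipschitz
    {V K : ℕ} (hV : 2 ≤ V) (hK : 2 ≤ K) (m : ℕ) (hm : 1 ≤ m)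
    (ν0 : Measure (Fin K → ℝ)) (hprob : IsProbabilityMeasure ν0)
    (hsupp : ν0 (simplex K)ᶜ = 0) :
    (∀ θ' θ'' : Fin K → Fin V → ℝ, IsParam θ' → IsParam θ'' →
      distL1 ν0 m θ' θ'' ≤
        (2 * (V : ℝ)) ^ m * Real.sqrt (∑ k, ∑ ℓ, (θ' k ℓ - θ'' k ℓ) ^ 2)) ∧
    (∀ θ : Fin K → Fin V → ℝ, IsParam θ →
      ContinuousOn (fun θ' : Fin K → Fin V → ℝ => distL1 ν0 m θ θ')
        {θ' | IsParam θ'}) := by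
  have hmeas : ∀ᵐ h ∂ν0, h ∈ simplex K := by
    rw [ae_iff]
    exact hsupp
  -- words are bounded by 1 on the simplex
  have hword_le_one : ∀ (θ : Fin K → Fin V → ℝ), IsParam θ →
      ∀ h ∈ simplex K, ∀ v, |pWord θ h v| ≤ 1 := by
    intro θ hθ h hh v
    rw [pWord, abs_of_nonneg (Finset.sum_nonneg fun k _ => mul_nonneg (hh.1 k) (hθ.1 k v))]
    have hθle : ∀ k, θ k v ≤ 1 := by
      intro k
      calc θ k v ≤ ∑ ℓ, θ k ℓ :=
        Finset.single_le_sum (fun ℓ _ => hθ.1 k ℓ) (Finset.mem_univ v)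
      _ = 1 := hθ.2 k
    calc ∑ k, h k * θ k v ≤ ∑ k, h k * 1 :=
        Finset.sum_le_sum fun k _ => mul_le_mul_of_nonneg_left (hθle k) (hh.1 k)
      _ = 1 := by simp [hh.2]
  -- continuity and integrability of pDoc in h
  have hcont : ∀ (θ : Fin K → Fin V → ℝ) (x : Fin m → Fin V),
      Continuous (fun h => pDoc m θ h x) := by
    intro θ x
    unfold pDoc pWord
    exact continuous_finset_prod _ fun i _ => continuous_finset_sum _ fun k _ =>
      (continuous_apply k).mul continuous_const
  have hint : ∀ (θ : Fin K → Fin V → ℝ), IsParam θ → ∀ x : Fin m → Fin V,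
      Integrable (fun h => pDoc m θ h x) ν0 := by
    intro θ hθ x
    refine Integrable.mono' (integrable_const 1) ((hcont θ x).aestronglyMeasurable) ?_
    filter_upwards [hmeas] with h hh
    rw [Real.norm_eq_abs, pDoc, Finset.abs_prod]
    exact Finset.prod_le_one (fun i _ => abs_nonneg _)
      (fun i _ => hword_le_one θ hθ h hh (x i))
  have Hlip : ∀ θ' θ'' : Fin K → Fin V → ℝ, IsParam θ' → IsParam θ'' →
      distL1 ν0 m θ' θ'' ≤
        (2 * (V : ℝ)) ^ m * Real.sqrt (∑ k, ∑ ℓ, (θ' k ℓ - θ'' k ℓ) ^ 2) := by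
    intro θ' θ'' h' h''
    set D := Real.sqrt (∑ k, ∑ ℓ, (θ' k ℓ - θ'' k ℓ) ^ 2) with hD
    have hD0 : 0 ≤ D := Real.sqrt_nonneg _
    have hentry : ∀ k v, |θ' k v - θ'' k v| ≤ D := by
      intro k v
      rw [hD, ← Real.sqrt_sq_eq_abs]
      apply Real.sqrt_le_sqrt
      have h1 : (θ' k v - θ'' k v) ^ 2 ≤ ∑ ℓ, (θ' k ℓ - θ'' k ℓ) ^ 2 :=
        Finset.single_le_sum (f := fun ℓ => (θ' k ℓ - θ'' k ℓ) ^ 2)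
          (fun ℓ _ => sq_nonneg _) (Finset.mem_univ v)
      have h2 : ∑ ℓ, (θ' k ℓ - θ'' k ℓ) ^ 2 ≤ ∑ k, ∑ ℓ, (θ' k ℓ - θ'' k ℓ) ^ 2 :=
        Finset.single_le_sum (f := fun k => ∑ ℓ, (θ' k ℓ - θ'' k ℓ) ^ 2)
          (fun k _ => Finset.sum_nonneg fun ℓ _ => sq_nonneg _) (Finset.mem_univ k)
      exact h1.trans h2
    have hworddiff : ∀ h ∈ simplex K, ∀ v, |pWord θ' h v - pWord θ'' h v| ≤ D := by
      intro h hh v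
      have heq : pWord θ' h v - pWord θ'' h v = ∑ k, h k * (θ' k v - θ'' k v) := by
        rw [pWord, pWord, ← Finset.sum_sub_distrib]
        exact Finset.sum_congr rfl fun k _ => by ring
      rw [heq]
      calc |∑ k, h k * (θ' k v - θ'' k v)| ≤ ∑ k, |h k * (θ' k v - θ'' k v)| :=
          Finset.abs_sum_le_sum_abs _ _
        _ ≤ ∑ k, h k * D := Finset.sum_le_sum fun k _ => by
            rw [abs_mul, abs_of_nonneg (hh.1 k)]
            exact mul_le_mul_of_nonneg_left (hentry k v) (hh.1 k)
        _ = D := by rw [← Finset.sum_mul, hh.2, one_mul]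
    have hdoc : ∀ h ∈ simplex K, ∀ x : Fin m → Fin V,
        |pDoc m θ' h x - pDoc m θ'' h x| ≤ m * D := by
      intro h hh x
      rw [pDoc, pDoc]
      calc |∏ i, pWord θ' h (x i) - ∏ i, pWord θ'' h (x i)|
          ≤ ∑ i : Fin m, |pWord θ' h (x i) - pWord θ'' h (x i)| :=
            abs_prod_sub_prod_le _ _ _ (fun i _ => hword_le_one θ' h' h hh (x i))
              (fun i _ => hword_le_one θ'' h'' h hh (x i))
        _ ≤ ∑ _i : Fin m, D := Finset.sum_le_sum fun i _ => hworddiff h hh (x i)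
        _ = m * D := by simp [mul_comm]
    have hpM : ∀ x : Fin m → Fin V, |pM ν0 m θ' x - pM ν0 m θ'' x| ≤ m * D := by
      intro x
      rw [pM, pM, ← integral_sub (hint θ' h' x) (hint θ'' h'' x)]
      have hb := norm_integral_le_of_norm_le_const (μ := ν0)
        (f := fun h => pDoc m θ' h x - pDoc m θ'' h x) (C := m * D) ?_
      · simpa [Real.norm_eq_abs, measure_univ] using hb
      · filter_upwards [hmeas] with h hh
        simpa [Real.norm_eq_abs] using hdoc h hh x
    calc distL1 ν0 m θ' θ'' ≤ ∑ _x : Fin m → Fin V, ((m : ℝ) * D) :=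
        Finset.sum_le_sum fun x _ => hpM x
      _ = ((V : ℝ) ^ m) * ((m : ℝ) * D) := by
          simp [Finset.sum_const, Finset.card_univ, mul_comm]
      _ ≤ (2 * (V : ℝ)) ^ m * D := by
          rw [mul_pow]
          have hm2 : (m : ℝ) ≤ 2 ^ m := by exact_mod_cast (Nat.lt_two_pow_self (n := m)).le
          calc (V : ℝ) ^ m * ((m : ℝ) * D) = (m : ℝ) * ((V : ℝ) ^ m * D) := by ring
            _ ≤ 2 ^ m * ((V : ℝ) ^ m * D) := mul_le_mul_of_nonneg_right hm2
                (mul_nonneg (pow_nonneg (by positivity) m) hD0)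
            _ = (2 : ℝ) ^ m * (V : ℝ) ^ m * D := by ring
  refine ⟨Hlip, ?_⟩
  intro θ hθ θ0 hθ0
  rw [ContinuousWithinAt, tendsto_iff_dist_tendsto_zero]
  have htendsto : Tendsto (fun θ' : Fin K → Fin V → ℝ =>
      (2 * (V : ℝ)) ^ m * Real.sqrt (∑ k, ∑ ℓ, (θ0 k ℓ - θ' k ℓ) ^ 2))
      (nhdsWithin θ0 {θ' | IsParam θ'}) (nhds 0) := by
    have hg : Continuous fun θ' : Fin K → Fin V → ℝ =>
        (2 * (V : ℝ)) ^ m * Real.sqrt (∑ k, ∑ ℓ, (θ0 k ℓ - θ' k ℓ) ^ 2) := by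
      refine continuous_const.mul (Real.continuous_sqrt.comp ?_)
      refine continuous_finset_sum _ fun k _ => continuous_finset_sum _ fun ℓ _ => ?_
      exact (continuous_const.sub (continuous_apply_apply k ℓ)).pow 2
    have h0 := (hg.tendsto θ0).mono_left
      (nhdsWithin_le_nhds (s := {θ' | IsParam θ'}))
    simpa using h0
  refine squeeze_zero' ?_ ?_ htendsto
  · filter_upwards with _ using dist_nonneg
  · filter_upwards [self_mem_nhdsWithin] with θ' hθ'
    rw [Real.dist_eq]
    calc |distL1 ν0 m θ θ' - distL1 ν0 m θ θ0|
        = |∑ x : Fin m → Fin V,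
            (|pM ν0 m θ x - pM ν0 m θ' x| - |pM ν0 m θ x - pM ν0 m θ0 x|)| := by
          rw [distL1, distL1, Finset.sum_sub_distrib]
      _ ≤ ∑ x : Fin m → Fin V,
            abs (|pM ν0 m θ x - pM ν0 m θ' x| - |pM ν0 m θ x - pM ν0 m θ0 x|) :=
          Finset.abs_sum_le_sum_abs _ _
      _ ≤ ∑ x : Fin m → Fin V, |pM ν0 m θ0 x - pM ν0 m θ' x| := by
          refine Finset.sum_le_sum fun x _ => ?_
          refine (abs_abs_sub_abs_le_abs_sub _ _).trans ?_
          apply le_of_eq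
          congr 1
          ring
      _ = distL1 ν0 m θ0 θ' := rfl
      _ ≤ (2 * (V : ℝ)) ^ m * Real.sqrt (∑ k, ∑ ℓ, (θ0 k ℓ - θ' k ℓ) ^ 2) :=
          Hlip θ0 θ' hθ0 hθ'

end TopicModel
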